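/- GBT implies WHSP: if for all separable metrizable spaces X, Y and every function f : X → Y it holds that f is Baire class 1 if and only if f↾K has a point of continuity for every nonempty compact K ⊆ X, then for all disjoint A, B ⊆ ℕ^ℕ such that no F_σ subset of ℕ^ℕ separates A from B, there is a Cantor set C ⊆ A ∪ B such that C ∩ A is both dense and codense in C. -/

import Mathlib

open Filter Topology TopologicalSpace

/-- A set is Fσ if it is a countable union of closed sets. -/
def IsFsigma {X : Type*} [TopologicalSpace X] (S : Set X) : Prop :=
  ∃ F : ℕ → Set X, (∀ n, IsClosed (F n)) ∧ S = ⋃ n, F n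

/-- `f` is Baire class 1 if preimages of open sets are Fσ. -/
def BaireClassOne {X Y : Type*} [TopologicalSpace X] [TopologicalSpace Y] (f : X → Y) : Prop :=
  ∀ V : Set Y, IsOpen V → IsFsigma (f ⁻¹' V)

/-- The generalized Baire grand theorem: for all separable metrizable spaces `X, Y`
and every `f : X → Y`, `f` is Baire class 1 iff `f↾K` has a point of continuity for
every nonempty compact `K ⊆ X`. -/
def GBT : Prop :=
  ∀ (X Y : Type) [TopologicalSpace X] [TopologicalSpace Y]
    [SeparableSpace X] [MetrizableSpace X] [SeparableSpace Y] [MetrizableSpace Y],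
    ∀ f : X → Y,
      BaireClassOne f ↔
        ∀ K : Set X, IsCompact K → K.Nonempty →
          ∃ x : K, ContinuousAt (K.restrict f) x

/-- A Cantor set in the Baire space: a subset homeomorphic (with the subspace
topology) to the Cantor space `2^ℕ`. -/
def IsCantorSet (C : Set (ℕ → ℕ)) : Prop :=
  Nonempty (C ≃ₜ (ℕ → Bool))

/-- The weak Hurewicz separation property: for all disjoint `A, B ⊆ ℕ^ℕ` such that no
Fσ set separates `A` from `B`, there is a Cantor set `C ⊆ A ∪ B` with `C ∩ A` both
dense and codense in `C`. -/
def WHSP : Prop :=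
  ∀ A B : Set (ℕ → ℕ), Disjoint A B →
    (¬ ∃ S : Set (ℕ → ℕ), IsFsigma S ∧ A ⊆ S ∧ B ∩ S = ∅) →
    ∃ C : Set (ℕ → ℕ), IsCantorSet C ∧ C ⊆ A ∪ B ∧
      Dense {x : C | (x : ℕ → ℕ) ∈ A} ∧ Dense {x : C | (x : ℕ → ℕ) ∉ A}

/-- Auxiliary recursion: builds a Cantor scheme from a choice function. -/
def cantorD (Q : (ℕ → ℕ) → ℕ → Bool → (ℕ → ℕ)) (NM : (ℕ → ℕ) → ℕ → ℕ)
    (a₀ : ℕ → ℕ) (y : ℕ → Bool) : ℕ → (ℕ → ℕ) × ℕ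
  | 0 => (a₀, 1)
  | n + 1 =>
      (Q (cantorD Q NM a₀ y n).1 (cantorD Q NM a₀ y n).2 (y n),
       NM (cantorD Q NM a₀ y n).1 (cantorD Q NM a₀ y n).2)

/-- The main construction: inside a nonempty closed set `K'` in which both `K' ∩ A`
and `K' ∩ B` are dense, build a Cantor set on which `A` is dense and codense. -/
theorem cantor_construction (A B K' : Set (ℕ → ℕ)) (hdisj : Disjoint A B)
    (hK'closed : IsClosed K') (hK'ne : K'.Nonempty) (hK'sub : K' ⊆ A ∪ B)
    (hA : K' ⊆ closure (K' ∩ A)) (hB : K' ⊆ closure (K' ∩ B)) :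
    ∃ C : Set (ℕ → ℕ), IsCantorSet C ∧ C ⊆ A ∪ B ∧
      Dense {x : C | (x : ℕ → ℕ) ∈ A} ∧ Dense {x : C | (x : ℕ → ℕ) ∉ A} := by
  classical
  -- cylinders are open
  have cylopen : ∀ (p : ℕ → ℕ) (m : ℕ), IsOpen {z : ℕ → ℕ | ∀ i < m, z i = p i} := by
    intro p m
    have : {z : ℕ → ℕ | ∀ i < m, z i = p i} =
        ⋂ i : Fin m, (fun z : ℕ → ℕ => z i) ⁻¹' {p i} := by
      ext z
      simp only [Set.mem_setOf_eq, Set.mem_iInter, Set.mem_preimage, Set.mem_singleton_iff]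
      exact ⟨fun h i => h i i.2, fun h i hi => h ⟨i, hi⟩⟩
    rw [this]
    exact isOpen_iInter_of_finite fun i =>
      (continuous_apply (i : ℕ)).isOpen_preimage _ (isOpen_discrete _)
  -- picking points in a dense set within a cylinder
  have pick : ∀ S : Set (ℕ → ℕ), K' ⊆ closure (K' ∩ S) → ∀ p ∈ K', ∀ m : ℕ,
      ∃ q, q ∈ K' ∧ q ∈ S ∧ (∀ i < m, q i = p i) ∧ (p ∈ S → q = p) := by
    intro S hS p hp m
    by_cases hpS : p ∈ S
    · exact ⟨p, hp, hpS, fun _ _ => rfl, fun _ => rfl⟩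
    · obtain ⟨q, hq1, hq2⟩ := (mem_closure_iff.1 (hS hp)) _ (cylopen p m) (fun i _ => rfl)
      exact ⟨q, hq2.1, hq2.2, hq1, fun h => absurd h hpS⟩
  have key : ∀ p m, ∃ q₀ q₁ : ℕ → ℕ, ∃ j : ℕ, p ∈ K' →
      q₀ ∈ K' ∧ q₀ ∈ A ∧ q₁ ∈ K' ∧ q₁ ∈ B ∧ (∀ i < m, q₀ i = p i) ∧ (∀ i < m, q₁ i = p i) ∧
      (p ∈ A → q₀ = p) ∧ (p ∈ B → q₁ = p) ∧ q₀ j ≠ q₁ j := by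
    intro p m
    by_cases hp : p ∈ K'
    · obtain ⟨q₀, h₀K, h₀A, h₀c, h₀e⟩ := pick A hA p hp m
      obtain ⟨q₁, h₁K, h₁B, h₁c, h₁e⟩ := pick B hB p hp m
      have hne : q₀ ≠ q₁ := fun hq => Set.disjoint_left.1 hdisj h₀A (hq ▸ h₁B)
      obtain ⟨j, hj⟩ := Function.ne_iff.1 hne
      exact ⟨q₀, q₁, j, fun _ => ⟨h₀K, h₀A, h₁K, h₁B, h₀c, h₁c, h₀e, h₁e, hj⟩⟩
    · exact ⟨p, p, 0, fun h => absurd h hp⟩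
  choose q₀ q₁ jj hkey using key
  obtain ⟨z₀, hz₀⟩ := hK'ne
  set a₀ := q₀ z₀ 0 with ha₀def
  have ha₀K : a₀ ∈ K' := (hkey z₀ 0 hz₀).1
  have ha₀A : a₀ ∈ A := (hkey z₀ 0 hz₀).2.1
  set Q : (ℕ → ℕ) → ℕ → Bool → (ℕ → ℕ) := fun p m b => if b = true then q₁ p m else q₀ p m
    with hQdef
  set NM : (ℕ → ℕ) → ℕ → ℕ := fun p m => max (m + 1) (jj p m + 1) with hNMdef
  set D : (ℕ → Bool) → ℕ → (ℕ → ℕ) × ℕ := fun y => cantorD Q NM a₀ y with hDdef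
  have hD0 : ∀ y, D y 0 = (a₀, 1) := fun _ => rfl
  have hDs : ∀ y n, D y (n + 1) =
      (Q (D y n).1 (D y n).2 (y n), NM (D y n).1 (D y n).2) := fun _ _ => rfl
  -- membership invariant
  have hmem : ∀ y n, (D y n).1 ∈ K' := by
    intro y n
    induction n with
    | zero => exact ha₀K
    | succ n ih =>
      rw [hDs]
      rcases Bool.eq_false_or_eq_true (y n) with hb | hb <;>
        simp only [hQdef, hb, if_true, if_false, Bool.false_eq_true, Bool.true_eq_false]
      · exact (hkey _ _ ih).2.2.1
      · exact (hkey _ _ ih).1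
  -- length invariants
  have hlen_succ : ∀ y n, (D y n).2 + 1 ≤ (D y (n + 1)).2 := by
    intro y n; rw [hDs]; exact le_max_left _ _
  have hlen_jj : ∀ y n, jj (D y n).1 (D y n).2 + 1 ≤ (D y (n + 1)).2 := by
    intro y n; rw [hDs]; exact le_max_right _ _
  have hlen_ge : ∀ y n, n + 1 ≤ (D y n).2 := by
    intro y n
    induction n with
    | zero => simp [hD0]
    | succ n ih => exact le_trans (by omega) (hlen_succ y n)
  have hlen_mono : ∀ y n k, (D y n).2 ≤ (D y (n + k)).2 := by
    intro y n k
    induction k with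
    | zero => exact le_refl _
    | succ k ih => exact le_trans ih (le_trans (Nat.le_succ _) (hlen_succ y (n + k)))
  -- agreement invariants
  have hagree1 : ∀ y n i, i < (D y n).2 → (D y (n + 1)).1 i = (D y n).1 i := by
    intro y n i hi
    rw [hDs]
    rcases Bool.eq_false_or_eq_true (y n) with hb | hb <;>
      simp only [hQdef, hb, if_true, if_false, Bool.false_eq_true, Bool.true_eq_false]
    · exact (hkey _ _ (hmem y n)).2.2.2.2.2.1 i hi
    · exact (hkey _ _ (hmem y n)).2.2.2.2.1 i hi
  have hagree : ∀ y n k i, i < (D y n).2 → (D y (n + k)).1 i = (D y n).1 i := by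
    intro y n k i hi
    induction k with
    | zero => rfl
    | succ k ih =>
      rw [show n + (k + 1) = (n + k) + 1 from rfl,
        hagree1 y (n + k) i (lt_of_lt_of_le hi (hlen_mono y n k))]
      exact ih
  -- locality
  have hloc : ∀ (n : ℕ) (y y' : ℕ → Bool), (∀ i < n, y i = y' i) → D y n = D y' n := by
    intro n
    induction n with
    | zero => intro y y' _; rfl
    | succ n ih =>
      intro y y' hyy
      rw [hDs, hDs, ih y y' (fun i hi => hyy i (Nat.lt_succ_of_lt hi)),
        hyy n (Nat.lt_succ_self n)]
  -- the limit map
  set g : (ℕ → Bool) → (ℕ → ℕ) := fun y i => (D y (i + 1)).1 i with hgdef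
  have hgD : ∀ y n i, i < (D y n).2 → g y i = (D y n).1 i := by
    intro y n i hi
    rcases le_total (i + 1) n with hle | hle
    · obtain ⟨k, rfl⟩ := Nat.le.dest hle
      exact (hagree y (i + 1) k i (lt_of_lt_of_le (Nat.lt_succ_self i)
        (le_trans (Nat.le_succ _) (hlen_ge y (i + 1))))).symm
    · obtain ⟨k, hk⟩ := Nat.le.dest hle
      show (D y (i + 1)).1 i = (D y n).1 i
      rw [← hk]
      exact hagree y n k i hi
  have hgDlt : ∀ y n i, i < n → g y i = (D y n).1 i := fun y n i hi =>
    hgD y n i (lt_of_lt_of_le hi (le_trans (Nat.le_succ n) (hlen_ge y n)))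
  -- g y lies in K'
  have hgK : ∀ y, g y ∈ K' := by
    intro y
    have htd : Tendsto (fun n => (D y n).1) atTop (𝓝 (g y)) := by
      rw [tendsto_pi_nhds]
      intro i
      refine Tendsto.congr' ?_ tendsto_const_nhds
      filter_upwards [eventually_atTop.2 ⟨i + 1, fun n hn => hn⟩] with n hn
      exact hgDlt y n i (lt_of_lt_of_le (Nat.lt_succ_self i) hn)
    exact hK'closed.mem_of_tendsto htd (Eventually.of_forall fun n => hmem y n)
  -- injectivity
  have hinj : Function.Injective g := by
    intro y y' hgy
    by_contra hne
    have hne' : ∃ n, y n ≠ y' n := Function.ne_iff.1 hne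
    set n := Nat.find hne' with hndef
    have hyn : y n ≠ y' n := Nat.find_spec hne'
    have hagr : ∀ i < n, y i = y' i := fun i hi => by
      have := Nat.find_min hne' hi; simpa using this
    have hDeq : D y n = D y' n := hloc n y y' hagr
    set p := (D y n).1 with hpdef
    set m := (D y n).2 with hmdef
    set j := jj p m with hjdef
    have hj : q₀ p m j ≠ q₁ p m j := (hkey p m (hmem y n)).2.2.2.2.2.2.2.2
    have hjlt : j < (D y (n + 1)).2 := lt_of_lt_of_le (Nat.lt_succ_self j) (hlen_jj y n)
    have hjlt' : j < (D y' (n + 1)).2 := by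
      have : jj (D y' n).1 (D y' n).2 + 1 ≤ (D y' (n + 1)).2 := hlen_jj y' n
      rw [← hDeq] at this
      exact lt_of_lt_of_le (Nat.lt_succ_self j) this
    have h1 : g y j = Q p m (y n) j := by
      rw [hgD y (n + 1) j hjlt, hDs]
    have h2 : g y' j = Q p m (y' n) j := by
      rw [hgD y' (n + 1) j hjlt', hDs, ← hDeq]
    have : Q p m (y n) j ≠ Q p m (y' n) j := by
      rcases Bool.eq_false_or_eq_true (y n) with hb | hb <;>
        rcases Bool.eq_false_or_eq_true (y' n) with hb' | hb'
      · exact absurd (hb.trans hb'.symm) hyn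
      · simp only [hQdef, hb, hb', if_true, if_false, Bool.false_eq_true, Bool.true_eq_false]
        first
          | exact hj
          | exact hj.symm
      · simp only [hQdef, hb, hb', if_true, if_false, Bool.false_eq_true, Bool.true_eq_false]
        first
          | exact hj
          | exact hj.symm
      · exact absurd (hb.trans hb'.symm) hyn
    exact this (h1 ▸ h2 ▸ congrFun hgy j)
  -- continuity
  have hcont : Continuous g := by
    apply continuous_pi
    intro i
    have hfac : (fun y => g y i) =
        (fun v : Fin (i + 1) → Bool =>
          (D (fun k => if hk : k < i + 1 then v ⟨k, hk⟩ else false) (i + 1)).1 i) ∘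
        (fun (y : ℕ → Bool) (j : Fin (i + 1)) => y j) := by
      funext y
      show g y i = (D (fun k => if hk : k < i + 1 then y k else false) (i + 1)).1 i
      rw [hloc (i + 1) (fun k => if hk : k < i + 1 then y k else false) y
        (fun k hk => dif_pos hk)]
    rw [hfac]
    exact Continuous.comp continuous_of_discreteTopology
      (continuous_pi fun j => continuous_apply (j : ℕ))
  -- eventually-constant branches land in A (resp. B)
  have hstabA : ∀ (y : ℕ → Bool) (n : ℕ), (∀ i, n ≤ i → y i = false) → g y ∈ A := by
    intro y n hy
    have hA1 : (D y (n + 1)).1 ∈ A := by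
      rw [hDs]
      simp only [hQdef, hy n (le_refl n), if_false, Bool.false_eq_true]
      exact (hkey _ _ (hmem y n)).2.1
    have hstab : ∀ k, (D y (n + 1 + k)).1 = (D y (n + 1)).1 := by
      intro k
      induction k with
      | zero => rfl
      | succ k ih =>
        rw [show n + 1 + (k + 1) = (n + 1 + k) + 1 from rfl, hDs]
        simp only [hQdef, hy (n + 1 + k) (by omega), if_false, Bool.false_eq_true]
        rw [(hkey _ _ (hmem y (n + 1 + k))).2.2.2.2.2.2.1 (ih ▸ hA1), ih]
    have hgeq : g y = (D y (n + 1)).1 := by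
      funext i
      rw [hgDlt y (n + 1 + (i + 1)) i (by omega), hstab (i + 1)]
    rw [hgeq]
    exact hA1
  have hstabB : ∀ (y : ℕ → Bool) (n : ℕ), (∀ i, n ≤ i → y i = true) → g y ∈ B := by
    intro y n hy
    have hB1 : (D y (n + 1)).1 ∈ B := by
      rw [hDs]
      simp only [hQdef, hy n (le_refl n), if_true]
      exact (hkey _ _ (hmem y n)).2.2.2.1
    have hstab : ∀ k, (D y (n + 1 + k)).1 = (D y (n + 1)).1 := by
      intro k
      induction k with
      | zero => rfl
      | succ k ih =>
        rw [show n + 1 + (k + 1) = (n + 1 + k) + 1 from rfl, hDs]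
        simp only [hQdef, hy (n + 1 + k) (by omega), if_true]
        rw [(hkey _ _ (hmem y (n + 1 + k))).2.2.2.2.2.2.2.1 (ih ▸ hB1), ih]
    have hgeq : g y = (D y (n + 1)).1 := by
      funext i
      rw [hgDlt y (n + 1 + (i + 1)) i (by omega), hstab (i + 1)]
    rw [hgeq]
    exact hB1
  -- assemble the Cantor set
  set C : Set (ℕ → ℕ) := Set.range g with hCdef
  have hce : Topology.IsClosedEmbedding g := hcont.isClosedEmbedding hinj
  have homeo : (ℕ → Bool) ≃ₜ C := hce.toIsEmbedding.toHomeomorph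
  refine ⟨C, ⟨homeo.symm⟩, ?_, ?_, ?_⟩
  · rintro z ⟨y, rfl⟩
    exact hK'sub (hgK y)
  · -- Dense A part
    intro c
    rw [Topology.IsEmbedding.subtypeVal.closure_eq_preimage_closure_image, Set.mem_preimage]
    obtain ⟨y, hy⟩ := c.2
    have htd : Tendsto (fun N => g (fun i => if i < N then y i else false)) atTop
        (𝓝 (g y)) := by
      rw [tendsto_pi_nhds]
      intro i
      refine Tendsto.congr' ?_ tendsto_const_nhds
      filter_upwards [eventually_atTop.2 ⟨i + 1, fun N hN => hN⟩] with N hN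
      have hDeq : D (fun k => if k < N then y k else false) (i + 1) = D y (i + 1) :=
        hloc (i + 1) _ y (fun k hk => if_pos (lt_of_lt_of_le hk hN))
      show g y i = g (fun k => if k < N then y k else false) i
      rw [hgdef]
      simp only
      rw [hDeq]
    have hmemS : ∀ N : ℕ, g (fun i => if i < N then y i else false) ∈
        Subtype.val '' {x : C | (x : ℕ → ℕ) ∈ A} := by
      intro N
      have hgA : g (fun i => if i < N then y i else false) ∈ A :=
        hstabA _ N (fun i hi => if_neg (not_lt.2 hi))
      exact ⟨⟨_, ⟨_, rfl⟩⟩, hgA, rfl⟩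
    rw [← hy]
    exact mem_closure_of_tendsto htd (Eventually.of_forall hmemS)
  · -- Dense complement part
    intro c
    rw [Topology.IsEmbedding.subtypeVal.closure_eq_preimage_closure_image, Set.mem_preimage]
    obtain ⟨y, hy⟩ := c.2
    have htd : Tendsto (fun N => g (fun i => if i < N then y i else true)) atTop
        (𝓝 (g y)) := by
      rw [tendsto_pi_nhds]
      intro i
      refine Tendsto.congr' ?_ tendsto_const_nhds
      filter_upwards [eventually_atTop.2 ⟨i + 1, fun N hN => hN⟩] with N hN
      have hDeq : D (fun k => if k < N then y k else true) (i + 1) = D y (i + 1) :=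
        hloc (i + 1) _ y (fun k hk => if_pos (lt_of_lt_of_le hk hN))
      show g y i = g (fun k => if k < N then y k else true) i
      rw [hgdef]
      simp only
      rw [hDeq]
    have hmemS : ∀ N : ℕ, g (fun i => if i < N then y i else true) ∈
        Subtype.val '' {x : C | (x : ℕ → ℕ) ∉ A} := by
      intro N
      have hgB : g (fun i => if i < N then y i else true) ∈ B :=
        hstabB _ N (fun i hi => if_neg (not_lt.2 hi))
      exact ⟨⟨_, ⟨_, rfl⟩⟩, Set.disjoint_right.1 hdisj hgB, rfl⟩
    rw [← hy]
    exact mem_closure_of_tendsto htd (Eventually.of_forall hmemS)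

/-- The generalized Baire grand theorem implies the weak Hurewicz separation
property. -/
theorem WHSP_of_GBT (h : GBT) : WHSP := by
  intro A B hdisj hsep
  classical
  set X := ↥(A ∪ B) with hXdef
  set f : X → Bool := fun x => if (x : ℕ → ℕ) ∈ A then true else false with hfdef
  have hfA : ∀ x : X, f x = true ↔ (x : ℕ → ℕ) ∈ A := by
    intro x
    by_cases hx : (x : ℕ → ℕ) ∈ A <;> simp [hfdef, hx]
  -- f is not Baire class one
  have hnb : ¬ BaireClassOne f := by
    intro hb
    obtain ⟨F, hFcl, hFeq⟩ := hb {true} (isOpen_discrete _)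
    have hex : ∀ n, ∃ Cn : Set (ℕ → ℕ), IsClosed Cn ∧ Subtype.val ⁻¹' Cn = F n := by
      intro n
      exact isClosed_induced_iff.1 (hFcl n)
    choose Cn hCncl hCne using hex
    apply hsep
    refine ⟨⋃ n, Cn n, ⟨Cn, hCncl, rfl⟩, ?_, ?_⟩
    · intro a ha
      have hx : (⟨a, Or.inl ha⟩ : X) ∈ f ⁻¹' {true} := by
        simp only [Set.mem_preimage, Set.mem_singleton_iff]
        exact (hfA _).2 ha
      rw [hFeq] at hx
      obtain ⟨n, hn⟩ := Set.mem_iUnion.1 hx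
      rw [← hCne n] at hn
      exact Set.mem_iUnion.2 ⟨n, hn⟩
    · ext b
      simp only [Set.mem_inter_iff, Set.mem_iUnion, Set.mem_empty_iff_false, iff_false,
        not_and, not_exists]
      intro hbB n hbC
      have hx : (⟨b, Or.inr hbB⟩ : X) ∈ F n := by
        rw [← hCne n]; exact hbC
      have : (⟨b, Or.inr hbB⟩ : X) ∈ f ⁻¹' {true} := by
        rw [hFeq]; exact Set.mem_iUnion.2 ⟨n, hx⟩
      have hbA : b ∈ A := (hfA _).1 this
      exact Set.disjoint_left.1 hdisj hbA hbB
  -- apply GBT contrapositively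
  have hnK : ¬ ∀ K : Set X, IsCompact K → K.Nonempty →
      ∃ x : K, ContinuousAt (K.restrict f) x := fun hK => hnb ((h X Bool f).2 hK)
  push_neg at hnK
  obtain ⟨K, hKc, hKne, hKnc⟩ := hnK
  set K' : Set (ℕ → ℕ) := Subtype.val '' K with hK'def
  have hK'c : IsCompact K' := hKc.image continuous_subtype_val
  have hK'closed : IsClosed K' := hK'c.isClosed
  have hK'ne : K'.Nonempty := hKne.image _
  have hK'sub : K' ⊆ A ∪ B := by
    rintro z ⟨x, _, rfl⟩
    exact x.2
  -- denseness of both A-points and B-points in K'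
  set e : ↥K → (ℕ → ℕ) := fun y => ((y : X) : ℕ → ℕ) with hedef
  have he : Topology.IsEmbedding e :=
    Topology.IsEmbedding.subtypeVal.comp Topology.IsEmbedding.subtypeVal
  have hdense : ∀ z ∈ K', z ∈ closure (K' ∩ A) ∧ z ∈ closure (K' ∩ B) := by
    rintro z ⟨x, hxK, rfl⟩
    set p : ↥K := ⟨x, hxK⟩ with hpdef
    have hnc : ¬ ContinuousAt (K.restrict f) p := hKnc p
    have hfreq : ∃ᶠ y in 𝓝 p, K.restrict f y ≠ K.restrict f p := by
      by_contra hc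
      rw [Filter.not_frequently] at hc
      have hev : ∀ᶠ y in 𝓝 p, K.restrict f y = K.restrict f p := by
        filter_upwards [hc] with y hy
        exact not_not.1 hy
      exact hnc (Tendsto.congr' (hev.mono fun y hy => hy.symm) tendsto_const_nhds)
    have hclos : p ∈ closure {y : ↥K | K.restrict f y ≠ K.restrict f p} :=
      mem_closure_iff_frequently.2 hfreq
    rw [he.closure_eq_preimage_closure_image] at hclos
    have hclos' : e p ∈ closure (e '' {y : ↥K | K.restrict f y ≠ K.restrict f p}) := hclos
    have hmemK' : ∀ y : ↥K, e y ∈ K' := fun y => ⟨(y : X), y.2, rfl⟩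
    rcases x.2 with hxA | hxB
    · -- x ∈ A : trivially in closure of A-points; other points are B-points
      constructor
      · exact subset_closure ⟨⟨x, hxK, rfl⟩, hxA⟩
      · refine closure_mono ?_ hclos'
        rintro _ ⟨y, hy, rfl⟩
        refine ⟨hmemK' y, ?_⟩
        have hyp : f (y : X) ≠ f (p : X) := hy
        have hpA : f (p : X) = true := (hfA _).2 hxA
        have : f (y : X) = false := by
          rcases Bool.eq_false_or_eq_true (f (y : X)) with hb | hb
          · exact absurd (hb.trans hpA.symm) hyp
          · exact hb
        have hynA : ((y : X) : ℕ → ℕ) ∉ A := fun hmem => by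
          rw [(hfA _).2 hmem] at this
          exact Bool.true_eq_false.mp this
        rcases (y : X).2 with hyA | hyB
        · exact absurd hyA hynA
        · exact hyB
    · have hxA : x.1 ∉ A := fun hmem => Set.disjoint_left.1 hdisj hmem hxB
      constructor
      · refine closure_mono ?_ hclos'
        rintro _ ⟨y, hy, rfl⟩
        refine ⟨hmemK' y, ?_⟩
        have hyp : f (y : X) ≠ f (p : X) := hy
        have hpA : f (p : X) = false := by
          rcases Bool.eq_false_or_eq_true (f (p : X)) with hb | hb
          · exact absurd ((hfA _).1 hb) hxA
          · exact hb
        have : f (y : X) = true := by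
          rcases Bool.eq_false_or_eq_true (f (y : X)) with hb | hb
          · exact hb
          · exact absurd (hb.trans hpA.symm) hyp
        exact (hfA _).1 this
      · exact subset_closure ⟨⟨x, hxK, rfl⟩, hxB⟩
  exact cantor_construction A B K' hdisj hK'closed hK'ne hK'sub
    (fun z hz => (hdense z hz).1) (fun z hz => (hdense z hz).2)
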